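/- For t > 0, the modified Bessel function of the second kind satisfies K_t(x) ~ (Γ(t)/2)·(2/x)^t as x → 0⁺, i.e., lim_{x→0⁺} K_t(x)·(x/2)^t = Γ(t)/2. -/
import Mathlib


open Real MeasureTheory Set Filter

/-- Modified Bessel function of the second kind of order `a`, via the integral
representation `K_a(z) = (1/2)(z/2)^a ∫₀^∞ t^{-a-1} exp(-t - z²/(4t)) dt` (valid for `z > 0`). -/
noncomputable def besselK (a z : ℝ) : ℝ :=
  (1 / 2) * (z / 2) ^ a * ∫ t in Ioi (0 : ℝ), t ^ (-a - 1) * Real.exp (-t - z ^ 2 / (4 * t))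

lemma besselK_subst (t c : ℝ) (hc : 0 < c) :
    (∫ s in Ioi (0 : ℝ), s ^ (-t - 1) * Real.exp (-s - c / s))
      = c ^ (-t) * ∫ u in Ioi (0 : ℝ), u ^ (t - 1) * Real.exp (-u - c / u) := by
  have h1 := MeasureTheory.integral_comp_rpow_Ioi
    (fun y : ℝ => y ^ (-t - 1) * Real.exp (-y - c / y)) (p := -1) (by norm_num)
  simp only [smul_eq_mul] at h1
  have h1' : (∫ x in Ioi (0 : ℝ), x ^ (t - 1) * Real.exp (-x⁻¹ - c * x))
      = ∫ s in Ioi (0 : ℝ), s ^ (-t - 1) * Real.exp (-s - c / s) := by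
    rw [← h1]
    refine setIntegral_congr_fun measurableSet_Ioi fun x hx => ?_
    have hx0 : (0 : ℝ) < x := hx
    have hinv : x ^ (-1 : ℝ) = x⁻¹ := Real.rpow_neg_one x
    have h2 : (x⁻¹) ^ (-t - 1) = x ^ (t + 1) := by
      rw [Real.inv_rpow hx0.le, ← Real.rpow_neg hx0.le]; ring_nf
    have h3 : c / x⁻¹ = c * x := by field_simp
    rw [hinv, h2, h3, show |(-1 : ℝ)| * x ^ ((-1 : ℝ) - 1) = x ^ (-2 : ℝ) by norm_num]
    rw [← mul_assoc, ← Real.rpow_add hx0]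
    congr 1
    ring
  have h2 := MeasureTheory.integral_comp_mul_left_Ioi
    (fun u : ℝ => (u / c) ^ (t - 1) * Real.exp (-c / u - u)) 0 hc
  rw [mul_zero, smul_eq_mul] at h2
  have h2' : (∫ x in Ioi (0 : ℝ), x ^ (t - 1) * Real.exp (-x⁻¹ - c * x))
      = c⁻¹ * ∫ u in Ioi (0 : ℝ), (u / c) ^ (t - 1) * Real.exp (-c / u - u) := by
    rw [← h2]
    refine setIntegral_congr_fun measurableSet_Ioi fun x hx => ?_
    have hx0 : (0 : ℝ) < x := hx
    beta_reduce
    rw [mul_div_cancel_left₀ _ hc.ne',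
      show -c / (c * x) = -x⁻¹ by field_simp]
  have h3 : (∫ u in Ioi (0 : ℝ), (u / c) ^ (t - 1) * Real.exp (-c / u - u))
      = c ^ (-(t - 1)) * ∫ u in Ioi (0 : ℝ), u ^ (t - 1) * Real.exp (-u - c / u) := by
    rw [← integral_const_mul]
    refine setIntegral_congr_fun measurableSet_Ioi fun u hu => ?_
    have hu0 : (0 : ℝ) < u := hu
    rw [Real.div_rpow hu0.le hc.le, div_eq_mul_inv, ← Real.rpow_neg hc.le]
    ring_nf
  rw [← h1', h2', h3, ← mul_assoc]
  congr 1
  rw [← Real.rpow_neg_one c, ← Real.rpow_add hc]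
  ring_nf

/-- For `t > 0`, `K_t(x) (x/2)^t → Γ(t)/2` as `x → 0⁺`. -/
theorem stmt_6 (t : ℝ) (ht : 0 < t) :
    Tendsto (fun x : ℝ => besselK t x * (x / 2) ^ t) (nhdsWithin 0 (Ioi 0))
      (nhds (Real.Gamma t / 2)) := by
  have hmeas : ∀ x : ℝ, AEStronglyMeasurable
      (fun u : ℝ => u ^ (t - 1) * Real.exp (-u - x ^ 2 / 4 / u))
      (volume.restrict (Ioi 0)) := by
    intro x
    refine ContinuousOn.aestronglyMeasurable ?_ measurableSet_Ioi
    refine ContinuousOn.mul ?_ ?_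
    · exact fun u hu =>
        (Real.continuousAt_rpow_const u (t - 1) (Or.inl (ne_of_gt hu))).continuousWithinAt
    · refine Real.continuous_exp.comp_continuousOn ?_
      refine ContinuousOn.sub continuous_neg.continuousOn ?_
      exact ContinuousOn.div continuousOn_const continuousOn_id fun u hu => ne_of_gt hu
  have key : ∀ x : ℝ, 0 < x → besselK t x * (x / 2) ^ t
      = (1 / 2) * ∫ u in Ioi (0 : ℝ), u ^ (t - 1) * Real.exp (-u - x ^ 2 / 4 / u) := by
    intro x hx
    have hc : (0 : ℝ) < x ^ 2 / 4 := by positivity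
    have hx2 : (0 : ℝ) < x / 2 := by positivity
    have hint : (∫ s in Ioi (0 : ℝ), s ^ (-t - 1) * Real.exp (-s - x ^ 2 / (4 * s)))
        = ∫ s in Ioi (0 : ℝ), s ^ (-t - 1) * Real.exp (-s - (x ^ 2 / 4) / s) := by
      refine setIntegral_congr_fun measurableSet_Ioi fun s hs => ?_
      rw [div_div]
    unfold besselK
    rw [hint, besselK_subst t (x ^ 2 / 4) hc]
    have e2 : (x ^ 2 / 4 : ℝ) ^ (-t) = (x / 2) ^ ((2 : ℝ) * (-t)) := by
      rw [show (x ^ 2 / 4 : ℝ) = (x / 2) ^ (2 : ℕ) by ring,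
        ← Real.rpow_natCast (x / 2) 2, ← Real.rpow_mul hx2.le]
      norm_num
    rw [e2]
    rw [show (1 / 2 : ℝ) * (x / 2) ^ t *
          ((x / 2) ^ ((2 : ℝ) * (-t)) *
            ∫ u in Ioi (0 : ℝ), u ^ (t - 1) * Real.exp (-u - x ^ 2 / 4 / u)) * (x / 2) ^ t
        = 1 / 2 * ((x / 2) ^ t * (x / 2) ^ ((2 : ℝ) * (-t)) * (x / 2) ^ t) *
            ∫ u in Ioi (0 : ℝ), u ^ (t - 1) * Real.exp (-u - x ^ 2 / 4 / u) by ring,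
      ← Real.rpow_add hx2, ← Real.rpow_add hx2,
      show t + 2 * (-t) + t = 0 by ring, Real.rpow_zero, mul_one]
  have hGamma : Real.Gamma t = ∫ u in Ioi (0 : ℝ), u ^ (t - 1) * Real.exp (-u) := by
    rw [Real.Gamma_eq_integral ht]
    exact setIntegral_congr_fun measurableSet_Ioi fun u hu => mul_comm _ _
  have hF : Tendsto
      (fun x : ℝ => ∫ u in Ioi (0 : ℝ), u ^ (t - 1) * Real.exp (-u - x ^ 2 / 4 / u))
      (nhdsWithin 0 (Ioi 0)) (nhds (Real.Gamma t)) := by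
    rw [hGamma]
    refine tendsto_integral_filter_of_dominated_convergence
      (fun u => u ^ (t - 1) * Real.exp (-u)) ?_ ?_ ?_ ?_
    · filter_upwards with x using hmeas x
    · filter_upwards with x
      filter_upwards [ae_restrict_mem measurableSet_Ioi] with u hu
      have hu0 : (0 : ℝ) < u := hu
      rw [Real.norm_eq_abs, abs_of_nonneg (by positivity)]
      have h1 : -u - x ^ 2 / 4 / u ≤ -u := by
        have : (0 : ℝ) ≤ x ^ 2 / 4 / u := by positivity
        linarith
      gcongr
    · exact (Real.GammaIntegral_convergent ht).congr_fun
        (fun u hu => mul_comm _ _) measurableSet_Ioi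
    · filter_upwards [ae_restrict_mem measurableSet_Ioi] with u hu
      have hu0 : (0 : ℝ) < u := hu
      have hcont : Continuous fun x : ℝ => u ^ (t - 1) * Real.exp (-u - x ^ 2 / 4 / u) := by
        continuity
      have := (hcont.tendsto 0).mono_left
        (nhdsWithin_le_nhds (s := Ioi (0 : ℝ)))
      simpa using this
  have hmain := hF.const_mul (1 / 2 : ℝ)
  rw [show (1 / 2 : ℝ) * Real.Gamma t = Real.Gamma t / 2 by ring] at hmain
  refine Tendsto.congr' ?_ hmain
  filter_upwards [self_mem_nhdsWithin] with x hx
  exact (key x hx).symm
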